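/- Under the hypotheses m_A, m_C, Δm > 0, Δm < m_A, m'_A = m_A − Δm, m'_C = m_C + Δm, p_A, p_C ∈ R², the kinetic-energy conservation equation (1/m_A)‖p_A‖² + (1/m_C)‖p_C‖² = (1/m'_A)‖p_A − Δp‖² + (1/m'_C)‖p_C + Δp‖² admits a solution Δp ∈ R². -/

import Mathlib

open scoped RealInnerProductSpace

noncomputable section

abbrev E2 := EuclideanSpace ℝ (Fin 2)

theorem stmt_5 (mA mC dm : ℝ) (hmA : 0 < mA) (hmC : 0 < mC) (hdm : 0 < dm)
    (hlt : dm < mA) (mA' mC' : ℝ) (hA' : mA' = mA - dm) (hC' : mC' = mC + dm)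
    (pA pC : E2) :
    ∃ dp : E2,
      (1 / mA) * ‖pA‖ ^ 2 + (1 / mC) * ‖pC‖ ^ 2 =
        (1 / mA') * ‖pA - dp‖ ^ 2 + (1 / mC') * ‖pC + dp‖ ^ 2 := by
  subst hA' hC'
  set a := mA - dm with ha
  set c := mC + dm with hc
  have hapos : 0 < a := by simp [ha]; linarith
  have hcpos : 0 < c := by simp [hc]; linarith
  have hacpos : 0 < a + c := by linarith
  set s : E2 := pA + pC with hs
  set L : ℝ := (1/mA) * ‖pA‖^2 + (1/mC) * ‖pC‖^2 with hL
  set M : ℝ := ‖s‖^2 / (a + c) with hM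
  have hac : a + c = mA + mC := by rw [ha, hc]; ring
  have hML : M ≤ L := by
    have h1 : ‖s‖ ≤ ‖pA‖ + ‖pC‖ := norm_add_le _ _
    have h2 : ‖s‖^2 ≤ (‖pA‖ + ‖pC‖)^2 := by
      nlinarith [norm_nonneg s, norm_nonneg pA, norm_nonneg pC]
    have key : (‖pA‖+‖pC‖)^2 ≤ (mA+mC) * L := by
      rw [hL]
      have h3 := sq_nonneg (mC*‖pA‖ - mA*‖pC‖)
      have h4 : (mA*mC) * ((mA+mC) * ((1/mA)*‖pA‖^2 + (1/mC)*‖pC‖^2) - (‖pA‖+‖pC‖)^2)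
          = (mC*‖pA‖ - mA*‖pC‖)^2 := by
        field_simp
        ring
      nlinarith [mul_pos hmA hmC]
    rw [hM, hac, div_le_iff₀ (by linarith : (0:ℝ) < mA + mC)]
    nlinarith
  set t : ℝ := Real.sqrt ((L - M) * (a*c/(a+c))) with htdef
  have ht2 : t^2 = (L - M) * (a*c/(a+c)) := by
    rw [htdef, Real.sq_sqrt]
    apply mul_nonneg (by linarith)
    positivity
  set u : E2 := EuclideanSpace.single (0 : Fin 2) (1:ℝ) with hu
  have hun : ‖u‖ = 1 := by simp [hu]
  refine ⟨pA - (a/(a+c)) • s + t • u, ?_⟩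
  have hpA : pA - (pA - (a/(a+c)) • s + t • u) = (a/(a+c)) • s - t • u := by
    abel
  have hpC : pC + (pA - (a/(a+c)) • s + t • u) = (c/(a+c)) • s + t • u := by
    have h1 : (c/(a+c) : ℝ) = 1 - a/(a+c) := by field_simp; ring
    rw [h1, sub_smul, one_smul, hs]
    abel
  rw [hpA, hpC]
  have e1 : ‖(a/(a+c)) • s - t • u‖^2
      = (a/(a+c))^2 * ‖s‖^2 - 2*((a/(a+c))*t)*⟪s, u⟫ + t^2 := by
    rw [norm_sub_sq_real, real_inner_smul_left, real_inner_smul_right,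
      norm_smul, norm_smul, hun, mul_pow, mul_pow]
    simp only [Real.norm_eq_abs, sq_abs, one_pow]
    ring
  have e2 : ‖(c/(a+c)) • s + t • u‖^2
      = (c/(a+c))^2 * ‖s‖^2 + 2*((c/(a+c))*t)*⟪s, u⟫ + t^2 := by
    rw [norm_add_sq_real, real_inner_smul_left, real_inner_smul_right,
      norm_smul, norm_smul, hun, mul_pow, mul_pow]
    simp only [Real.norm_eq_abs, sq_abs, one_pow]
    ring
  rw [e1, e2, ht2, hM]
  field_simp
  ring
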